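/- If y : (0,a) → ℝ is twice differentiable with y' > 0 on (0,a) and satisfies the ODE (y'/r)^{n-1} · y'' = e^y with n = 2, and y(r) → +∞ and y'(r) → +∞ as r → a⁻, then y''(r) → +∞ as r → a⁻. -/

import Mathlib

open Real Set Filter Topology

/-- If `y` solves the n = 2 Calabi ODE `(y'/r) * y'' = e^y` on `(0,a)` with `y' > 0`,
and `y, y' → +∞` as `r → a⁻`, then `y'' → +∞` as `r → a⁻`. -/
theorem calabi_second_deriv_tendsto_atTop
    (a : ℝ) (ha : 0 < a) (y y' y'' : ℝ → ℝ)
    (hy' : ∀ r ∈ Ioo (0:ℝ) a, HasDerivAt y (y' r) r)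
    (hy'' : ∀ r ∈ Ioo (0:ℝ) a, HasDerivAt y' (y'' r) r)
    (hy'pos : ∀ r ∈ Ioo (0:ℝ) a, 0 < y' r)
    (hode : ∀ r ∈ Ioo (0:ℝ) a, (y' r / r) * y'' r = Real.exp (y r))
    (hy_top : Tendsto y (𝓝[<] a) atTop)
    (hy'_top : Tendsto y' (𝓝[<] a) atTop) :
    Tendsto y'' (𝓝[<] a) atTop := by
  -- Get an interval (b, a) on which y' is large
  have h1 : ∀ᶠ r in 𝓝[<] a, max (2*a) 1 ≤ y' r := hy'_top.eventually_ge_atTop _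
  rw [eventually_iff, mem_nhdsLT_iff_exists_Ioo_subset] at h1
  obtain ⟨b, hb, hsub⟩ := h1
  set l : ℝ := max b (a/2) with hl
  have hla : l < a := max_lt hb (by linarith)
  have hl0 : 0 < l := lt_of_lt_of_le (by linarith) (le_max_right _ _)
  have hIoo : Ioo l a ⊆ Ioo (0:ℝ) a := fun r hr => ⟨lt_trans hl0 hr.1, hr.2⟩
  have hIoob : Ioo l a ⊆ Ioo b a := fun r hr =>
    ⟨lt_of_le_of_lt (le_max_left _ _) hr.1, hr.2⟩
  -- ODE rearranged: y' * y'' = r * exp (y r)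
  have hode' : ∀ r ∈ Ioo (0:ℝ) a, y' r * y'' r = r * Real.exp (y r) := by
    intro r hr
    have h := hode r hr
    have hr0 : (r:ℝ) ≠ 0 := ne_of_gt hr.1
    field_simp at h
    linarith [h]
  -- g = exp ∘ y - (y')² is monotone on (l, a)
  set g : ℝ → ℝ := fun r => Real.exp (y r) - (y' r)^2 with hg
  have hgderiv : ∀ r ∈ Ioo l a,
      HasDerivAt g (Real.exp (y r) * y' r - 2 * y' r * y'' r) r := by
    intro r hr
    have h1 : HasDerivAt (fun r => Real.exp (y r)) (Real.exp (y r) * y' r) r :=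
      (hy' r (hIoo hr)).exp
    have h2 : HasDerivAt (fun r => (y' r)^2) (2 * y' r * y'' r) r := by
      have := (hy'' r (hIoo hr)).fun_pow 2
      simpa [mul_comm, mul_assoc, mul_left_comm] using this
    exact h1.sub h2
  have hmono : MonotoneOn g (Ioo l a) := by
    apply monotoneOn_of_hasDerivWithinAt_nonneg (convex_Ioo l a)
      (f' := fun r => Real.exp (y r) * y' r - 2 * y' r * y'' r)
    · intro r hr
      exact ((hgderiv r hr).continuousAt).continuousWithinAt
    · intro r hr
      rw [interior_Ioo] at hr
      exact (hgderiv r hr).hasDerivWithinAt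
    · intro r hr
      rw [interior_Ioo] at hr
      have hy'big : max (2*a) 1 ≤ y' r := hsub (hIoob hr)
      have h2a : 2 * a ≤ y' r := le_trans (le_max_left _ _) hy'big
      have := hode' r (hIoo hr)
      have hexp : 0 < Real.exp (y r) := Real.exp_pos _
      nlinarith [hr.2]
  -- the midpoint and the constant K
  set m : ℝ := (l + a) / 2 with hm
  have hmla : m ∈ Ioo l a := ⟨by simp [hm]; linarith, by simp [hm]; linarith⟩
  have hm0 : 0 < m := lt_trans hl0 hmla.1
  set K : ℝ := g m with hK
  -- key inequality on (m, a)
  have key : ∀ r ∈ Ioo m a, m * y' r - a * |K| ≤ y'' r := by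
    intro r hr
    have hrla : r ∈ Ioo l a := ⟨lt_trans hmla.1 hr.1, hr.2⟩
    have hgK : K ≤ g r := hmono hmla hrla (le_of_lt hr.1)
    have hy'big : max (2*a) 1 ≤ y' r := hsub (hIoob hrla)
    have h1 : (1:ℝ) ≤ y' r := le_trans (le_max_right _ _) hy'big
    have hy'p : 0 < y' r := lt_of_lt_of_le one_pos h1
    have hodr := hode' r (hIoo hrla)
    have hKabs : K ≤ |K| := le_abs_self K
    have hKabs' : -|K| ≤ K := neg_abs_le K
    have hKnn : 0 ≤ |K| := abs_nonneg K
    -- exp (y r) ≥ (y' r)^2 + K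
    have hexp : (y' r)^2 + K ≤ Real.exp (y r) := by
      have : g r = Real.exp (y r) - (y' r)^2 := rfl
      linarith [hgK, this]
    -- y' r * y'' r = r * exp (y r) ≥ m * (y' r)^2 - a * |K|
    have h2 : y' r * (m * y' r - a * |K|) ≤ y' r * y'' r := by
      rw [hodr]
      have hrm : m ≤ r := le_of_lt hr.1
      have hra : r ≤ a := le_of_lt hr.2
      have hma : m ≤ a := le_of_lt hmla.2
      nlinarith [Real.exp_pos (y r),
        mul_le_mul_of_nonneg_left hexp hm0.le,
        mul_le_mul_of_nonneg_right hrm (Real.exp_pos (y r)).le,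
        mul_le_mul_of_nonneg_left h1 (mul_nonneg ha.le hKnn),
        mul_le_mul_of_nonneg_right hma hKnn,
        mul_le_mul_of_nonneg_left hKabs' hm0.le]
    exact le_of_mul_le_mul_left h2 hy'p
  -- conclude
  have hmem : Ioo m a ∈ 𝓝[<] a := Ioo_mem_nhdsLT_of_mem ⟨hmla.2, le_refl a⟩
  refine tendsto_atTop_mono' _ ?_
    (tendsto_atTop_add_const_right _ (-(a * |K|)) (hy'_top.const_mul_atTop hm0))
  filter_upwards [hmem] with r hr
  have := key r hr
  linarith
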